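/- For q = 3 and c₄ = 8: for all β with 0 < β ≤ 1/4, (2^β/(β^β·(1−β)^(1−β)))·(1/3 + (2/3)·(β/3)^(8β)) ≤ β^β. -/

import Mathlib

open Real


lemma aux_rpow_le {x r : ℝ} (m n : ℕ) (hn : 0 < n) (hx : 0 ≤ x) (hr : 0 ≤ r)
    (h : x ^ m ≤ r ^ n) : x ^ ((m : ℝ)/(n : ℝ)) ≤ r := by
  have hn' : ((n:ℝ)) ≠ 0 := Nat.cast_ne_zero.2 hn.ne'
  have h1 : x ^ ((m:ℝ)/(n:ℝ)) = ((x ^ m : ℝ)) ^ ((1:ℝ)/n) := by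
    rw [← Real.rpow_natCast x m, ← Real.rpow_mul hx]
    ring_nf
  have h2 : (r : ℝ) = ((r ^ n : ℝ)) ^ ((1:ℝ)/n) := by
    rw [← Real.rpow_natCast r n, ← Real.rpow_mul hr, mul_one_div, div_self hn', Real.rpow_one]
  rw [h1, h2]
  exact Real.rpow_le_rpow (by positivity) h (by positivity)

lemma aux_le_rpow {x r : ℝ} (m n : ℕ) (hn : 0 < n) (hx : 0 ≤ x) (hr : 0 ≤ r)
    (h : r ^ n ≤ x ^ m) : r ≤ x ^ ((m : ℝ)/(n : ℝ)) := by
  have hn' : ((n:ℝ)) ≠ 0 := Nat.cast_ne_zero.2 hn.ne'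
  have h1 : x ^ ((m:ℝ)/(n:ℝ)) = ((x ^ m : ℝ)) ^ ((1:ℝ)/n) := by
    rw [← Real.rpow_natCast x m, ← Real.rpow_mul hx]
    ring_nf
  have h2 : (r : ℝ) = ((r ^ n : ℝ)) ^ ((1:ℝ)/n) := by
    rw [← Real.rpow_natCast r n, ← Real.rpow_mul hr, mul_one_div, div_self hn', Real.rpow_one]
  rw [h1, h2]
  exact Real.rpow_le_rpow (by positivity) h (by positivity)


lemma pow_eq_split (x : ℝ) (n : ℕ) : x ^ n = (x ^ 100) ^ (n / 100) * x ^ (n % 100) := by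
  rw [← pow_mul, ← pow_add, Nat.div_add_mod]

lemma exp_le_quadratic {t : ℝ} (ht : t ≤ 0) : Real.exp t ≤ 1 + t + t^2/2 := by
  have hs : 0 ≤ -t := by linarith
  have h1 : 1 + (-t) + (-t)^2/2 ≤ Real.exp (-t) := by
    have h := Real.sum_le_exp_of_nonneg hs 3
    simp [Finset.sum_range_succ, Nat.factorial] at h
    nlinarith [h]
  have hpos1 : (0:ℝ) ≤ 1 + t + t^2/2 := by nlinarith [sq_nonneg (t+1)]
  have hmul : Real.exp t * Real.exp (-t) = 1 := by
    rw [← Real.exp_add]; simp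
  nlinarith [h1, hmul, Real.exp_pos (-t), hpos1, sq_nonneg (t*t), Real.exp_pos t]


lemma exp_ge_linear {x : ℝ} (hx : 28/5 ≤ x) : (96/5)*x ≤ Real.exp x := by
  have hx0 : (0:ℝ) ≤ x := by linarith
  have h := Real.sum_le_exp_of_nonneg hx0 7
  simp [Finset.sum_range_succ, Nat.factorial] at h
  have hy : (0:ℝ) ≤ x - 28/5 := by linarith
  nlinarith [h, hy, sq_nonneg (x - 28/5), mul_nonneg (mul_nonneg hy hy) hy,
    mul_nonneg (mul_nonneg (mul_nonneg hy hy) hy) hy,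
    mul_nonneg (mul_nonneg (mul_nonneg (mul_nonneg hy hy) hy) hy) hy,
    mul_nonneg (mul_nonneg (mul_nonneg (mul_nonneg (mul_nonneg hy hy) hy) hy) hy) hy]

lemma key_numeric {x : ℝ} (hx : 28/5 ≤ x) : 64 * Real.exp (-x) * x^2 ≤ (10/3)*x := by
  have hx0 : (0:ℝ) < x := by linarith
  have hex := exp_ge_linear hx
  have hpos : (0:ℝ) < (96/5)*x := by linarith
  have h2 : (Real.exp x)⁻¹ ≤ ((96/5)*x)⁻¹ := by
    apply inv_anti₀ hpos hex
  have h3 : ((96/5:ℝ)*x)⁻¹ * x^2 = (5/96)*x := by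
    field_simp
  have h4 : (Real.exp x)⁻¹ * x^2 ≤ (5/96)*x := by
    rw [← h3]
    exact mul_le_mul_of_nonneg_right h2 (sq_nonneg x)
  rw [Real.exp_neg]
  nlinarith [h4]

lemma case1 (β : ℝ) (hβ : 0 < β) (hβ' : β ≤ 1/100) :
    ((2 : ℝ) ^ β / (β ^ β * (1 - β) ^ (1 - β))) *
      (1 / 3 + (2 / 3) * (β / 3) ^ ((8 : ℝ) * β)) ≤ β ^ β := by
  have h1β : (0:ℝ) < 1 - β := by linarith
  have hB : (0:ℝ) < β ^ β := Real.rpow_pos_of_pos hβ β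
  have hC : (0:ℝ) < (1-β) ^ (1-β) := Real.rpow_pos_of_pos h1β _
  rw [div_mul_eq_mul_div, div_le_iff₀ (by positivity)]
  -- rewrite rpows as exp
  have hβ3 : (0:ℝ) < β/3 := by positivity
  rw [Real.rpow_def_of_pos (by norm_num : (0:ℝ) < 2),
      Real.rpow_def_of_pos hβ3, Real.rpow_def_of_pos hβ, Real.rpow_def_of_pos h1β]
  set L := Real.log (β/3) with hLdef
  -- x
  have hlog3 : Real.log (β/3) = Real.log β - Real.log 3 :=
    Real.log_div hβ.ne' (by norm_num)
  obtain ⟨x, hx1⟩ : ∃ x, L = -x := ⟨-L, by ring⟩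
  have hβE : β = 3 * Real.exp (-x) := by
    rw [← hx1, hLdef, Real.exp_log hβ3]; ring
  have hlogβ : Real.log β = Real.log 3 - x := by
    rw [hLdef] at hx1; rw [hlog3] at hx1; linarith
  -- x ≥ 28/5
  have hexp28 : Real.exp (28/5) ≤ 300 := by
    by_contra hcon
    push_neg at hcon
    have h5 : (300:ℝ)^5 ≤ (Real.exp (28/5))^5 :=
      pow_le_pow_left₀ (by norm_num) hcon.le 5
    have he : (Real.exp (28/5))^5 = Real.exp 28 := by
      rw [← Real.exp_nat_mul]; norm_num
    have he1 : Real.exp 28 = (Real.exp 1)^(28:ℕ) := by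
      rw [← Real.exp_nat_mul]; norm_num
    have hd9 := Real.exp_one_lt_d9
    have : (Real.exp 1)^(28:ℕ) < (2.7182818286:ℝ)^(28:ℕ) :=
      pow_lt_pow_left₀ hd9 (Real.exp_pos 1).le (by norm_num)
    rw [he, he1] at h5
    have : ((300:ℝ))^5 < (2.7182818286:ℝ)^(28:ℕ) := lt_of_le_of_lt h5 this
    norm_num at this
  have hx28 : 28/5 ≤ x := by
    have hL28 : L ≤ -(28/5) := by
      rw [hLdef, Real.log_le_iff_le_exp hβ3]
      have : Real.exp (-(28/5)) = (Real.exp (28/5))⁻¹ := Real.exp_neg _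
      rw [this]
      rw [le_inv_comm₀ (by positivity) (Real.exp_pos _)]
      calc Real.exp (28/5) ≤ 300 := hexp28
        _ ≤ (β/3)⁻¹ := by
          rw [le_inv_comm₀ (by norm_num) (by positivity)]
          linarith
    rw [hx1] at hL28; linarith
  -- constant: log 2 + 1 - 2 log 3 ≤ 0
  have hlog2 : Real.log 2 < 0.6931471808 := Real.log_two_lt_d9
  have hlog3' : (1:ℝ) ≤ Real.log 3 := by
    rw [Real.le_log_iff_exp_le (by norm_num : (0:ℝ) < 3)]
    exact (Real.exp_one_lt_d9).le.trans (by norm_num)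
  have hc : Real.log 2 + 1 - 2*Real.log 3 ≤ 0 := by nlinarith
  -- the key scalar inequality
  have hE : (0:ℝ) < Real.exp (-x) := Real.exp_pos _
  have hkey := key_numeric hx28
  have main : Real.log 2 * β + ((2/3)*(L*((8:ℝ)*β)) + (L*((8:ℝ)*β))^2/3)
      ≤ Real.log β * (2*β) + (-β) := by
    rw [hx1, hlogβ, hβE]
    have hc3 : (Real.log 2 + 1 - 2*Real.log 3) * Real.exp (-x) ≤ 0 :=
      mul_nonpos_of_nonpos_of_nonneg hc hE.le
    have hint1 : (64 * Real.exp (-x) * x^2) * Real.exp (-x) ≤ ((10/3)*x) * Real.exp (-x) :=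
      mul_le_mul_of_nonneg_right hkey hE.le
    nlinarith [hc3, hint1]
  -- exp chain
  set t := L*((8:ℝ)*β) with htdef
  have ht0 : t ≤ 0 := by
    have hLneg : L < 0 := by
      rw [hLdef]
      exact Real.log_neg hβ3 (by linarith)
    have : (0:ℝ) < 8*β := by linarith
    rw [htdef]
    exact mul_nonpos_of_nonpos_of_nonneg hLneg.le this.le
  have hq := exp_le_quadratic ht0
  have hDb : 1/3 + 2/3 * Real.exp t ≤ 1 + (2/3)*t + t^2/3 := by nlinarith [hq]
  have hexps : (1:ℝ) + (2/3)*t + t^2/3 ≤ Real.exp ((2/3)*t + t^2/3) := by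
    have := Real.add_one_le_exp ((2/3)*t + t^2/3)
    linarith
  have hposD : (0:ℝ) ≤ 1/3 + 2/3 * Real.exp t := by positivity
  have hstepB : -β ≤ Real.log (1-β) * (1-β) := by
    have h := Real.log_le_sub_one_of_pos (inv_pos.2 h1β)
    rw [Real.log_inv] at h
    have h2 := mul_le_mul_of_nonneg_right h h1β.le
    have h3 : ((1-β)⁻¹ - 1) * (1-β) = β := by field_simp; ring
    nlinarith [h2, h3]
  calc Real.exp (Real.log 2 * β) * (1/3 + 2/3 * Real.exp (t))
      ≤ Real.exp (Real.log 2 * β) * Real.exp ((2/3)*t + t^2/3) := by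
        apply mul_le_mul_of_nonneg_left (le_trans hDb hexps) (Real.exp_pos _).le
    _ = Real.exp (Real.log 2 * β + ((2/3)*t + t^2/3)) := by rw [← Real.exp_add]
    _ ≤ Real.exp (Real.log β * (2*β) + (-β)) := Real.exp_le_exp.2 (by linarith [main])
    _ ≤ Real.exp (Real.log β * (2*β) + Real.log (1-β) * (1-β)) :=
        Real.exp_le_exp.2 (by linarith [hstepB])
    _ = Real.exp (Real.log β * β) * (Real.exp (Real.log β * β) * Real.exp (Real.log (1-β) * (1-β))) := by
        rw [← Real.exp_add, ← Real.exp_add]; ring_nf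

set_option maxHeartbeats 1000000 in
lemma step (β a b r s u v : ℝ) (hβ : 0 < β) (ha : 0 < a) (h1 : a ≤ β) (h2 : β ≤ b)
    (hb : b ≤ 1/4) (hba : 3*b ≤ 4*a)
    (hr : (a/3) ^ ((8:ℝ)*a) ≤ r) (hs : (2:ℝ) ^ b ≤ s)
    (hu : u ≤ b ^ ((2:ℝ)*b)) (hv : v ≤ (1-b) ^ ((1:ℝ)-b))
    (hu0 : 0 ≤ u) (hv0 : 0 ≤ v)
    (hnum : s * (1/3 + 2/3 * r) ≤ u * v) :
    ((2 : ℝ) ^ β / (β ^ β * (1 - β) ^ (1 - β))) *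
      (1 / 3 + (2 / 3) * (β / 3) ^ ((8 : ℝ) * β)) ≤ β ^ β := by
  have hβ4 : β ≤ 1/4 := h2.trans hb
  have h1β : (0:ℝ) < 1 - β := by linarith
  have hbpos : (0:ℝ) < b := lt_of_lt_of_le hβ h2
  have h1b : (0:ℝ) < 1 - b := by linarith
  -- numeric log bounds
  have hexp1 := Real.exp_one_lt_d9
  have hexp1' := Real.exp_one_gt_d9
  have hexp2 : Real.exp 2 < 12 := by
    have h : Real.exp 2 = Real.exp 1 * Real.exp 1 := by
      rw [← Real.exp_add]; norm_num
    nlinarith [Real.exp_pos 1]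
  have hla : Real.log (a/3) ≤ -2 := by
    rw [Real.log_le_iff_le_exp (by positivity)]
    have he : Real.exp (-2:ℝ) = (Real.exp 2)⁻¹ := Real.exp_neg _
    rw [he, le_inv_comm₀ (by positivity) (Real.exp_pos _)]
    refine le_of_lt (lt_of_lt_of_le hexp2 ?_)
    rw [le_inv_comm₀ (by norm_num) (by positivity)]
    have : a ≤ 1/4 := h1.trans hβ4
    linarith
  have hexp4 : Real.exp (4/3:ℝ) ≤ 4 := by
    by_contra hcon
    push_neg at hcon
    have h3 : (Real.exp (4/3:ℝ))^(3:ℕ) = Real.exp 4 := by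
      rw [← Real.exp_nat_mul]; norm_num
    have h4 : Real.exp 4 = (Real.exp 1)^(4:ℕ) := by
      rw [← Real.exp_nat_mul]; norm_num
    have h5 : (Real.exp 1)^(4:ℕ) < (2.7182818286:ℝ)^(4:ℕ) :=
      pow_lt_pow_left₀ hexp1 (Real.exp_pos 1).le (by norm_num)
    have h6 : (2.7182818286:ℝ)^(4:ℕ) < 64 := by norm_num
    have h7 : (4:ℝ)^(3:ℕ) < (Real.exp (4/3:ℝ))^(3:ℕ) :=
      pow_lt_pow_left₀ hcon (by norm_num) (by norm_num)
    rw [h3, h4] at h7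
    norm_num at h7
    linarith
  have hlβ : Real.log β ≤ -(4/3) := by
    rw [Real.log_le_iff_le_exp hβ]
    have he : Real.exp (-(4/3):ℝ) = (Real.exp (4/3:ℝ))⁻¹ := Real.exp_neg _
    rw [he, le_inv_comm₀ (by positivity) (Real.exp_pos _)]
    refine le_trans hexp4 ?_
    rw [le_inv_comm₀ (by norm_num) hβ]
    linarith
  have hl1b : (-1:ℝ) ≤ Real.log (1-b) := by
    rw [Real.le_log_iff_exp_le h1b]
    have he : Real.exp (-1:ℝ) = (Real.exp 1)⁻¹ := Real.exp_neg _
    rw [he, inv_le_comm₀ (Real.exp_pos _) (by linarith)]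
    refine le_trans ?_ hexp1'.le
    rw [inv_le_comm₀ (by linarith) (by norm_num)]
    norm_num
    linarith
  -- monotonicity chains
  have hq2 : (β/3) ^ ((8:ℝ)*β) ≤ (a/3) ^ ((8:ℝ)*a) := by
    rw [Real.rpow_def_of_pos (by positivity), Real.rpow_def_of_pos (by positivity),
      Real.exp_le_exp]
    have hdiff : Real.log (β/3) - Real.log (a/3) ≤ (β - a)/a := by
      have h := Real.log_le_sub_one_of_pos (show (0:ℝ) < β/a by positivity)
      rw [Real.log_div hβ.ne' ha.ne'] at h
      have e : Real.log (β/3) - Real.log (a/3) = Real.log β - Real.log a := by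
        rw [Real.log_div hβ.ne' (by norm_num : (3:ℝ) ≠ 0),
          Real.log_div ha.ne' (by norm_num : (3:ℝ) ≠ 0)]
        ring
      have heq2 : (β-a)/a = β/a - 1 := by
        rw [sub_div, div_self ha.ne']
      rw [e, heq2]
      exact h
    have e1 : β * (Real.log (β/3) - Real.log (a/3)) ≤ β * ((β-a)/a) :=
      mul_le_mul_of_nonneg_left hdiff hβ.le
    have e2 : (β - a) * Real.log (a/3) ≤ (β - a) * (-2) :=
      mul_le_mul_of_nonneg_left hla (by linarith)
    have e3 : β * ((β-a)/a) ≤ 2*(β-a) := by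
      rw [show β * ((β-a)/a) = β*(β-a)/a by ring, div_le_iff₀ ha]
      nlinarith
    nlinarith [e1, e2, e3]
  have hq3 : b ^ ((2:ℝ)*b) ≤ β ^ ((2:ℝ)*β) := by
    rw [Real.rpow_def_of_pos hbpos, Real.rpow_def_of_pos hβ, Real.exp_le_exp]
    have hdiff : Real.log b - Real.log β ≤ (b - β)/β := by
      have h := Real.log_le_sub_one_of_pos (show (0:ℝ) < b/β by positivity)
      rw [Real.log_div hbpos.ne' hβ.ne'] at h
      have heq2 : (b-β)/β = b/β - 1 := by
        rw [sub_div, div_self hβ.ne']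
      rw [heq2]
      exact h
    have e1 : b * (Real.log b - Real.log β) ≤ b * ((b-β)/β) :=
      mul_le_mul_of_nonneg_left hdiff hbpos.le
    have e2 : (b - β) * Real.log β ≤ (b - β) * (-(4/3)) :=
      mul_le_mul_of_nonneg_left hlβ (by linarith)
    have e3 : b * ((b-β)/β) ≤ (4/3)*(b-β) := by
      rw [show b * ((b-β)/β) = b*(b-β)/β by ring, div_le_iff₀ hβ]
      nlinarith
    nlinarith [e1, e2, e3]
  have hq4 : (1-b) ^ ((1:ℝ)-b) ≤ (1-β) ^ ((1:ℝ)-β) := by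
    rw [Real.rpow_def_of_pos h1b, Real.rpow_def_of_pos h1β, Real.exp_le_exp]
    have hdiff : Real.log (1-b) - Real.log (1-β) ≤ ((1-b) - (1-β))/(1-β) := by
      have h := Real.log_le_sub_one_of_pos (show (0:ℝ) < (1-b)/(1-β) by positivity)
      rw [Real.log_div h1b.ne' h1β.ne'] at h
      have heq2 : ((1-b)-(1-β))/(1-β) = (1-b)/(1-β) - 1 := by
        rw [sub_div, div_self h1β.ne']
      rw [heq2]
      exact h
    have e1 : (1-β) * (Real.log (1-b) - Real.log (1-β)) ≤ (1-β) * (((1-b)-(1-β))/(1-β)) :=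
      mul_le_mul_of_nonneg_left hdiff h1β.le
    have e1' : (1-β) * (((1-b)-(1-β))/(1-β)) = (1-b)-(1-β) := by
      field_simp
    have e2 : ((1-β) - (1-b)) * (-1) ≤ ((1-β)-(1-b)) * Real.log (1-b) :=
      mul_le_mul_of_nonneg_left hl1b (by linarith)
    nlinarith [e1, e1', e2]
  -- assemble
  have hB : (0:ℝ) < β ^ β := Real.rpow_pos_of_pos hβ β
  have hC : (0:ℝ) < (1-β) ^ (1-β) := Real.rpow_pos_of_pos h1β _
  rw [div_mul_eq_mul_div, div_le_iff₀ (by positivity)]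
  have hs' : (2:ℝ) ^ β ≤ s := (Real.rpow_le_rpow_of_exponent_le (by norm_num) h2).trans hs
  have hD : (1:ℝ)/3 + 2/3 * (β/3) ^ ((8:ℝ)*β) ≤ 1/3 + 2/3 * r := by
    have := hq2.trans hr
    linarith
  have hD0 : (0:ℝ) ≤ 1/3 + 2/3 * (β/3) ^ ((8:ℝ)*β) := by positivity
  have hs0 : (0:ℝ) ≤ s := le_trans (Real.rpow_pos_of_pos (by norm_num) b).le hs
  calc (2:ℝ) ^ β * (1/3 + 2/3 * (β/3) ^ ((8:ℝ)*β))
      ≤ s * (1/3 + 2/3 * r) := mul_le_mul hs' hD hD0 hs0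
    _ ≤ u * v := hnum
    _ ≤ β ^ ((2:ℝ)*β) * (1-β) ^ ((1:ℝ)-β) :=
        mul_le_mul (hu.trans hq3) (hv.trans hq4) hv0 (Real.rpow_nonneg hβ.le _)
    _ = β ^ β * (β ^ β * (1-β) ^ (1-β)) := by
        rw [show (2:ℝ)*β = β + β by ring, Real.rpow_add hβ]
        ring


set_option maxHeartbeats 4000000 in
lemma interval_0 (β : ℝ) (hβ : 0 < β) (hlo : 10/1000 ≤ β) (hhi : β ≤ 13/1000) :
    ((2 : ℝ) ^ β / (β ^ β * (1 - β) ^ (1 - β))) *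
      (1 / 3 + (2 / 3) * (β / 3) ^ ((8 : ℝ) * β)) ≤ β ^ β := by
  refine step β (10/1000) (13/1000) (6336221/10000000) (10090517/10000000) (2233071/2500000) (9871679/10000000) hβ (by norm_num) hlo hhi
    (by norm_num) (by norm_num) ?_ ?_ ?_ ?_ (by norm_num) (by norm_num) (by norm_num)
  · have e : (8:ℝ)*(10/1000) = ((80:ℕ):ℝ)/((1000:ℕ):ℝ) := by norm_num
    rw [e]
    exact aux_rpow_le 80 1000 (by norm_num) (by norm_num) (by norm_num) (by rw [pow_eq_split _ 1000]; norm_num)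
  · have e : (13/1000 : ℝ) = ((13:ℕ):ℝ)/((1000:ℕ):ℝ) := by norm_num
    rw [e]
    exact aux_rpow_le 13 1000 (by norm_num) (by norm_num) (by norm_num) (by rw [pow_eq_split _ 1000]; norm_num)
  · have e : (2:ℝ)*(13/1000) = ((26:ℕ):ℝ)/((1000:ℕ):ℝ) := by norm_num
    rw [e]
    exact aux_le_rpow 26 1000 (by norm_num) (by norm_num) (by norm_num) (by rw [pow_eq_split _ 1000]; norm_num)
  · have e : (1:ℝ)-(13/1000) = ((987:ℕ):ℝ)/((1000:ℕ):ℝ) := by norm_num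
    rw [e]
    exact aux_le_rpow 987 1000 (by norm_num) (by norm_num) (by norm_num) (by rw [pow_eq_split _ 1000, pow_eq_split _ 987]; norm_num)


set_option maxHeartbeats 4000000 in
lemma interval_1 (β : ℝ) (hβ : 0 < β) (hlo : 13/1000 ≤ β) (hhi : β ≤ 17/1000) :
    ((2 : ℝ) ^ β / (β ^ β * (1 - β) ^ (1 - β))) *
      (1 / 3 + (2 / 3) * (β / 3) ^ ((8 : ℝ) * β)) ≤ β ^ β := by
  refine step β (13/1000) (17/1000) (2839223/5000000) (10118533/10000000) (2176583/2500000) (1966573/2000000) hβ (by norm_num) hlo hhi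
    (by norm_num) (by norm_num) ?_ ?_ ?_ ?_ (by norm_num) (by norm_num) (by norm_num)
  · have e : (8:ℝ)*(13/1000) = ((104:ℕ):ℝ)/((1000:ℕ):ℝ) := by norm_num
    rw [e]
    exact aux_rpow_le 104 1000 (by norm_num) (by norm_num) (by norm_num) (by rw [pow_eq_split _ 1000]; norm_num)
  · have e : (17/1000 : ℝ) = ((17:ℕ):ℝ)/((1000:ℕ):ℝ) := by norm_num
    rw [e]
    exact aux_rpow_le 17 1000 (by norm_num) (by norm_num) (by norm_num) (by rw [pow_eq_split _ 1000]; norm_num)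
  · have e : (2:ℝ)*(17/1000) = ((34:ℕ):ℝ)/((1000:ℕ):ℝ) := by norm_num
    rw [e]
    exact aux_le_rpow 34 1000 (by norm_num) (by norm_num) (by norm_num) (by rw [pow_eq_split _ 1000]; norm_num)
  · have e : (1:ℝ)-(17/1000) = ((983:ℕ):ℝ)/((1000:ℕ):ℝ) := by norm_num
    rw [e]
    exact aux_le_rpow 983 1000 (by norm_num) (by norm_num) (by norm_num) (by rw [pow_eq_split _ 1000, pow_eq_split _ 983]; norm_num)


set_option maxHeartbeats 4000000 in
lemma interval_2 (β : ℝ) (hβ : 0 < β) (hlo : 17/1000 ≤ β) (hhi : β ≤ 22/1000) :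
    ((2 : ℝ) ^ β / (β ^ β * (1 - β) ^ (1 - β))) *
      (1 / 3 + (2 / 3) * (β / 3) ^ ((8 : ℝ) * β)) ≤ β ^ β := by
  refine step β (17/1000) (22/1000) (4948261/10000000) (5076831/5000000) (2113521/2500000) (9784787/10000000) hβ (by norm_num) hlo hhi
    (by norm_num) (by norm_num) ?_ ?_ ?_ ?_ (by norm_num) (by norm_num) (by norm_num)
  · have e : (8:ℝ)*(17/1000) = ((136:ℕ):ℝ)/((1000:ℕ):ℝ) := by norm_num
    rw [e]
    exact aux_rpow_le 136 1000 (by norm_num) (by norm_num) (by norm_num) (by rw [pow_eq_split _ 1000]; norm_num)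
  · have e : (22/1000 : ℝ) = ((22:ℕ):ℝ)/((1000:ℕ):ℝ) := by norm_num
    rw [e]
    exact aux_rpow_le 22 1000 (by norm_num) (by norm_num) (by norm_num) (by rw [pow_eq_split _ 1000]; norm_num)
  · have e : (2:ℝ)*(22/1000) = ((44:ℕ):ℝ)/((1000:ℕ):ℝ) := by norm_num
    rw [e]
    exact aux_le_rpow 44 1000 (by norm_num) (by norm_num) (by norm_num) (by rw [pow_eq_split _ 1000]; norm_num)
  · have e : (1:ℝ)-(22/1000) = ((978:ℕ):ℝ)/((1000:ℕ):ℝ) := by norm_num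
    rw [e]
    exact aux_le_rpow 978 1000 (by norm_num) (by norm_num) (by norm_num) (by rw [pow_eq_split _ 1000, pow_eq_split _ 978]; norm_num)


set_option maxHeartbeats 4000000 in
lemma interval_3 (β : ℝ) (hβ : 0 < β) (hlo : 22/1000 ≤ β) (hhi : β ≤ 28/1000) :
    ((2 : ℝ) ^ β / (β ^ β * (1 - β) ^ (1 - β))) *
      (1 / 3 + (2 / 3) * (β / 3) ^ ((8 : ℝ) * β)) ≤ β ^ β := by
  refine step β (22/1000) (28/1000) (4210107/10000000) (10195977/10000000) (8185417/10000000) (2431933/2500000) hβ (by norm_num) hlo hhi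
    (by norm_num) (by norm_num) ?_ ?_ ?_ ?_ (by norm_num) (by norm_num) (by norm_num)
  · have e : (8:ℝ)*(22/1000) = ((176:ℕ):ℝ)/((1000:ℕ):ℝ) := by norm_num
    rw [e]
    exact aux_rpow_le 176 1000 (by norm_num) (by norm_num) (by norm_num) (by rw [pow_eq_split _ 1000]; norm_num)
  · have e : (28/1000 : ℝ) = ((28:ℕ):ℝ)/((1000:ℕ):ℝ) := by norm_num
    rw [e]
    exact aux_rpow_le 28 1000 (by norm_num) (by norm_num) (by norm_num) (by rw [pow_eq_split _ 1000]; norm_num)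
  · have e : (2:ℝ)*(28/1000) = ((56:ℕ):ℝ)/((1000:ℕ):ℝ) := by norm_num
    rw [e]
    exact aux_le_rpow 56 1000 (by norm_num) (by norm_num) (by norm_num) (by rw [pow_eq_split _ 1000]; norm_num)
  · have e : (1:ℝ)-(28/1000) = ((972:ℕ):ℝ)/((1000:ℕ):ℝ) := by norm_num
    rw [e]
    exact aux_le_rpow 972 1000 (by norm_num) (by norm_num) (by norm_num) (by rw [pow_eq_split _ 1000, pow_eq_split _ 972]; norm_num)


set_option maxHeartbeats 4000000 in
lemma interval_4 (β : ℝ) (hβ : 0 < β) (hlo : 28/1000 ≤ β) (hhi : β ≤ 36/1000) :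
    ((2 : ℝ) ^ β / (β ^ β * (1 - β) ^ (1 - β))) *
      (1 / 3 + (2 / 3) * (β / 3) ^ ((8 : ℝ) * β)) ≤ β ^ β := by
  refine step β (28/1000) (36/1000) (438731/1250000) (10252673/10000000) (983929/1250000) (2413183/2500000) hβ (by norm_num) hlo hhi
    (by norm_num) (by norm_num) ?_ ?_ ?_ ?_ (by norm_num) (by norm_num) (by norm_num)
  · have e : (8:ℝ)*(28/1000) = ((224:ℕ):ℝ)/((1000:ℕ):ℝ) := by norm_num
    rw [e]
    exact aux_rpow_le 224 1000 (by norm_num) (by norm_num) (by norm_num) (by rw [pow_eq_split _ 1000]; norm_num)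
  · have e : (36/1000 : ℝ) = ((36:ℕ):ℝ)/((1000:ℕ):ℝ) := by norm_num
    rw [e]
    exact aux_rpow_le 36 1000 (by norm_num) (by norm_num) (by norm_num) (by rw [pow_eq_split _ 1000]; norm_num)
  · have e : (2:ℝ)*(36/1000) = ((72:ℕ):ℝ)/((1000:ℕ):ℝ) := by norm_num
    rw [e]
    exact aux_le_rpow 72 1000 (by norm_num) (by norm_num) (by norm_num) (by rw [pow_eq_split _ 1000]; norm_num)
  · have e : (1:ℝ)-(36/1000) = ((964:ℕ):ℝ)/((1000:ℕ):ℝ) := by norm_num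
    rw [e]
    exact aux_le_rpow 964 1000 (by norm_num) (by norm_num) (by norm_num) (by rw [pow_eq_split _ 1000, pow_eq_split _ 964]; norm_num)


set_option maxHeartbeats 4000000 in
lemma interval_5 (β : ℝ) (hβ : 0 < β) (hlo : 36/1000 ≤ β) (hhi : β ≤ 46/1000) :
    ((2 : ℝ) ^ β / (β ^ β * (1 - β) ^ (1 - β))) *
      (1 / 3 + (2 / 3) * (β / 3) ^ ((8 : ℝ) * β)) ≤ β ^ β := by
  refine step β (36/1000) (46/1000) (69943/250000) (5161993/5000000) (7533099/10000000) (597543/625000) hβ (by norm_num) hlo hhi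
    (by norm_num) (by norm_num) ?_ ?_ ?_ ?_ (by norm_num) (by norm_num) (by norm_num)
  · have e : (8:ℝ)*(36/1000) = ((288:ℕ):ℝ)/((1000:ℕ):ℝ) := by norm_num
    rw [e]
    exact aux_rpow_le 288 1000 (by norm_num) (by norm_num) (by norm_num) (by rw [pow_eq_split _ 1000, pow_eq_split _ 288]; norm_num)
  · have e : (46/1000 : ℝ) = ((46:ℕ):ℝ)/((1000:ℕ):ℝ) := by norm_num
    rw [e]
    exact aux_rpow_le 46 1000 (by norm_num) (by norm_num) (by norm_num) (by rw [pow_eq_split _ 1000]; norm_num)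
  · have e : (2:ℝ)*(46/1000) = ((92:ℕ):ℝ)/((1000:ℕ):ℝ) := by norm_num
    rw [e]
    exact aux_le_rpow 92 1000 (by norm_num) (by norm_num) (by norm_num) (by rw [pow_eq_split _ 1000]; norm_num)
  · have e : (1:ℝ)-(46/1000) = ((954:ℕ):ℝ)/((1000:ℕ):ℝ) := by norm_num
    rw [e]
    exact aux_le_rpow 954 1000 (by norm_num) (by norm_num) (by norm_num) (by rw [pow_eq_split _ 1000, pow_eq_split _ 954]; norm_num)


set_option maxHeartbeats 4000000 in
lemma interval_6 (β : ℝ) (hβ : 0 < β) (hlo : 46/1000 ≤ β) (hhi : β ≤ 59/1000) :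
    ((2 : ℝ) ^ β / (β ^ β * (1 - β) ^ (1 - β))) *
      (1 / 3 + (2 / 3) * (β / 3) ^ ((8 : ℝ) * β)) ≤ β ^ β := by
  refine step β (46/1000) (59/1000) (1074693/5000000) (2083487/2000000) (7160783/10000000) (4721911/5000000) hβ (by norm_num) hlo hhi
    (by norm_num) (by norm_num) ?_ ?_ ?_ ?_ (by norm_num) (by norm_num) (by norm_num)
  · have e : (8:ℝ)*(46/1000) = ((368:ℕ):ℝ)/((1000:ℕ):ℝ) := by norm_num
    rw [e]
    exact aux_rpow_le 368 1000 (by norm_num) (by norm_num) (by norm_num) (by rw [pow_eq_split _ 1000, pow_eq_split _ 368]; norm_num)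
  · have e : (59/1000 : ℝ) = ((59:ℕ):ℝ)/((1000:ℕ):ℝ) := by norm_num
    rw [e]
    exact aux_rpow_le 59 1000 (by norm_num) (by norm_num) (by norm_num) (by rw [pow_eq_split _ 1000]; norm_num)
  · have e : (2:ℝ)*(59/1000) = ((118:ℕ):ℝ)/((1000:ℕ):ℝ) := by norm_num
    rw [e]
    exact aux_le_rpow 118 1000 (by norm_num) (by norm_num) (by norm_num) (by rw [pow_eq_split _ 1000]; norm_num)
  · have e : (1:ℝ)-(59/1000) = ((941:ℕ):ℝ)/((1000:ℕ):ℝ) := by norm_num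
    rw [e]
    exact aux_le_rpow 941 1000 (by norm_num) (by norm_num) (by norm_num) (by rw [pow_eq_split _ 1000, pow_eq_split _ 941]; norm_num)


set_option maxHeartbeats 4000000 in
lemma interval_7 (β : ℝ) (hβ : 0 < β) (hlo : 59/1000 ≤ β) (hhi : β ≤ 76/1000) :
    ((2 : ℝ) ^ β / (β ^ β * (1 - β) ^ (1 - β))) *
      (1 / 3 + (2 / 3) * (β / 3) ^ ((8 : ℝ) * β)) ≤ β ^ β := by
  refine step β (59/1000) (76/1000) (1565457/10000000) (2108183/2000000) (3379509/5000000) (4647837/5000000) hβ (by norm_num) hlo hhi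
    (by norm_num) (by norm_num) ?_ ?_ ?_ ?_ (by norm_num) (by norm_num) (by norm_num)
  · have e : (8:ℝ)*(59/1000) = ((472:ℕ):ℝ)/((1000:ℕ):ℝ) := by norm_num
    rw [e]
    exact aux_rpow_le 472 1000 (by norm_num) (by norm_num) (by norm_num) (by rw [pow_eq_split _ 1000, pow_eq_split _ 472]; norm_num)
  · have e : (76/1000 : ℝ) = ((76:ℕ):ℝ)/((1000:ℕ):ℝ) := by norm_num
    rw [e]
    exact aux_rpow_le 76 1000 (by norm_num) (by norm_num) (by norm_num) (by rw [pow_eq_split _ 1000]; norm_num)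
  · have e : (2:ℝ)*(76/1000) = ((152:ℕ):ℝ)/((1000:ℕ):ℝ) := by norm_num
    rw [e]
    exact aux_le_rpow 152 1000 (by norm_num) (by norm_num) (by norm_num) (by rw [pow_eq_split _ 1000]; norm_num)
  · have e : (1:ℝ)-(76/1000) = ((924:ℕ):ℝ)/((1000:ℕ):ℝ) := by norm_num
    rw [e]
    exact aux_le_rpow 924 1000 (by norm_num) (by norm_num) (by norm_num) (by rw [pow_eq_split _ 1000, pow_eq_split _ 924]; norm_num)


set_option maxHeartbeats 4000000 in
lemma interval_8 (β : ℝ) (hβ : 0 < β) (hlo : 76/1000 ≤ β) (hhi : β ≤ 98/1000) :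
    ((2 : ℝ) ^ β / (β ^ β * (1 - β) ^ (1 - β))) *
      (1 / 3 + (2 / 3) * (β / 3) ^ ((8 : ℝ) * β)) ≤ β ^ β := by
  refine step β (76/1000) (98/1000) (1070151/10000000) (10702887/10000000) (6342789/10000000) (4555817/5000000) hβ (by norm_num) hlo hhi
    (by norm_num) (by norm_num) ?_ ?_ ?_ ?_ (by norm_num) (by norm_num) (by norm_num)
  · have e : (8:ℝ)*(76/1000) = ((608:ℕ):ℝ)/((1000:ℕ):ℝ) := by norm_num
    rw [e]
    exact aux_rpow_le 608 1000 (by norm_num) (by norm_num) (by norm_num) (by rw [pow_eq_split _ 1000, pow_eq_split _ 608]; norm_num)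
  · have e : (98/1000 : ℝ) = ((98:ℕ):ℝ)/((1000:ℕ):ℝ) := by norm_num
    rw [e]
    exact aux_rpow_le 98 1000 (by norm_num) (by norm_num) (by norm_num) (by rw [pow_eq_split _ 1000]; norm_num)
  · have e : (2:ℝ)*(98/1000) = ((196:ℕ):ℝ)/((1000:ℕ):ℝ) := by norm_num
    rw [e]
    exact aux_le_rpow 196 1000 (by norm_num) (by norm_num) (by norm_num) (by rw [pow_eq_split _ 1000]; norm_num)
  · have e : (1:ℝ)-(98/1000) = ((902:ℕ):ℝ)/((1000:ℕ):ℝ) := by norm_num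
    rw [e]
    exact aux_le_rpow 902 1000 (by norm_num) (by norm_num) (by norm_num) (by rw [pow_eq_split _ 1000, pow_eq_split _ 902]; norm_num)


set_option maxHeartbeats 4000000 in
lemma interval_9 (β : ℝ) (hβ : 0 < β) (hlo : 98/1000 ≤ β) (hhi : β ≤ 126/1000) :
    ((2 : ℝ) ^ β / (β ^ β * (1 - β) ^ (1 - β))) *
      (1 / 3 + (2 / 3) * (β / 3) ^ ((8 : ℝ) * β)) ≤ β ^ β := by
  refine step β (98/1000) (126/1000) (171001/2500000) (10912639/10000000) (5933259/10000000) (4444787/5000000) hβ (by norm_num) hlo hhi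
    (by norm_num) (by norm_num) ?_ ?_ ?_ ?_ (by norm_num) (by norm_num) (by norm_num)
  · have e : (8:ℝ)*(98/1000) = ((784:ℕ):ℝ)/((1000:ℕ):ℝ) := by norm_num
    rw [e]
    exact aux_rpow_le 784 1000 (by norm_num) (by norm_num) (by norm_num) (by rw [pow_eq_split _ 1000, pow_eq_split _ 784]; norm_num)
  · have e : (126/1000 : ℝ) = ((126:ℕ):ℝ)/((1000:ℕ):ℝ) := by norm_num
    rw [e]
    exact aux_rpow_le 126 1000 (by norm_num) (by norm_num) (by norm_num) (by rw [pow_eq_split _ 1000]; norm_num)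
  · have e : (2:ℝ)*(126/1000) = ((252:ℕ):ℝ)/((1000:ℕ):ℝ) := by norm_num
    rw [e]
    exact aux_le_rpow 252 1000 (by norm_num) (by norm_num) (by norm_num) (by rw [pow_eq_split _ 1000]; norm_num)
  · have e : (1:ℝ)-(126/1000) = ((874:ℕ):ℝ)/((1000:ℕ):ℝ) := by norm_num
    rw [e]
    exact aux_le_rpow 874 1000 (by norm_num) (by norm_num) (by norm_num) (by rw [pow_eq_split _ 1000, pow_eq_split _ 874]; norm_num)


set_option maxHeartbeats 4000000 in
lemma interval_10 (β : ℝ) (hβ : 0 < β) (hlo : 126/1000 ≤ β) (hhi : β ≤ 162/1000) :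
    ((2 : ℝ) ^ β / (β ^ β * (1 - β) ^ (1 - β))) *
      (1 / 3 + (2 / 3) * (β / 3) ^ ((8 : ℝ) * β)) ≤ β ^ β := by
  refine step β (126/1000) (162/1000) (409483/10000000) (2797093/2500000) (5544761/10000000) (8623399/10000000) hβ (by norm_num) hlo hhi
    (by norm_num) (by norm_num) ?_ ?_ ?_ ?_ (by norm_num) (by norm_num) (by norm_num)
  · have e : (8:ℝ)*(126/1000) = ((1008:ℕ):ℝ)/((1000:ℕ):ℝ) := by norm_num
    rw [e]
    exact aux_rpow_le 1008 1000 (by norm_num) (by norm_num) (by norm_num) (by rw [pow_eq_split _ 1000, pow_eq_split _ 1008]; norm_num)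
  · have e : (162/1000 : ℝ) = ((162:ℕ):ℝ)/((1000:ℕ):ℝ) := by norm_num
    rw [e]
    exact aux_rpow_le 162 1000 (by norm_num) (by norm_num) (by norm_num) (by rw [pow_eq_split _ 1000]; norm_num)
  · have e : (2:ℝ)*(162/1000) = ((324:ℕ):ℝ)/((1000:ℕ):ℝ) := by norm_num
    rw [e]
    exact aux_le_rpow 324 1000 (by norm_num) (by norm_num) (by norm_num) (by rw [pow_eq_split _ 1000, pow_eq_split _ 324]; norm_num)
  · have e : (1:ℝ)-(162/1000) = ((838:ℕ):ℝ)/((1000:ℕ):ℝ) := by norm_num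
    rw [e]
    exact aux_le_rpow 838 1000 (by norm_num) (by norm_num) (by norm_num) (by rw [pow_eq_split _ 1000, pow_eq_split _ 838]; norm_num)


set_option maxHeartbeats 4000000 in
lemma interval_11 (β : ℝ) (hβ : 0 < β) (hlo : 162/1000 ≤ β) (hhi : β ≤ 200/1000) :
    ((2 : ℝ) ^ β / (β ^ β * (1 - β) ^ (1 - β))) *
      (1 / 3 + (2 / 3) * (β / 3) ^ ((8 : ℝ) * β)) ≤ β ^ β := by
  refine step β (162/1000) (200/1000) (113803/5000000) (1435873/1250000) (1050611/2000000) (2091279/2500000) hβ (by norm_num) hlo hhi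
    (by norm_num) (by norm_num) ?_ ?_ ?_ ?_ (by norm_num) (by norm_num) (by norm_num)
  · have e : (8:ℝ)*(162/1000) = ((1296:ℕ):ℝ)/((1000:ℕ):ℝ) := by norm_num
    rw [e]
    exact aux_rpow_le 1296 1000 (by norm_num) (by norm_num) (by norm_num) (by rw [pow_eq_split _ 1000, pow_eq_split _ 1296]; norm_num)
  · have e : (200/1000 : ℝ) = ((200:ℕ):ℝ)/((1000:ℕ):ℝ) := by norm_num
    rw [e]
    exact aux_rpow_le 200 1000 (by norm_num) (by norm_num) (by norm_num) (by rw [pow_eq_split _ 1000]; norm_num)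
  · have e : (2:ℝ)*(200/1000) = ((400:ℕ):ℝ)/((1000:ℕ):ℝ) := by norm_num
    rw [e]
    exact aux_le_rpow 400 1000 (by norm_num) (by norm_num) (by norm_num) (by rw [pow_eq_split _ 1000, pow_eq_split _ 400]; norm_num)
  · have e : (1:ℝ)-(200/1000) = ((800:ℕ):ℝ)/((1000:ℕ):ℝ) := by norm_num
    rw [e]
    exact aux_le_rpow 800 1000 (by norm_num) (by norm_num) (by norm_num) (by rw [pow_eq_split _ 1000, pow_eq_split _ 800]; norm_num)


set_option maxHeartbeats 4000000 in
lemma interval_12 (β : ℝ) (hβ : 0 < β) (hlo : 200/1000 ≤ β) (hhi : β ≤ 230/1000) :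
    ((2 : ℝ) ^ β / (β ^ β * (1 - β) ^ (1 - β))) *
      (1 / 3 + (2 / 3) * (β / 3) ^ ((8 : ℝ) * β)) ≤ β ^ β := by
  refine step β (200/1000) (230/1000) (131297/10000000) (234567/200000) (635777/1250000) (511067/625000) hβ (by norm_num) hlo hhi
    (by norm_num) (by norm_num) ?_ ?_ ?_ ?_ (by norm_num) (by norm_num) (by norm_num)
  · have e : (8:ℝ)*(200/1000) = ((1600:ℕ):ℝ)/((1000:ℕ):ℝ) := by norm_num
    rw [e]
    exact aux_rpow_le 1600 1000 (by norm_num) (by norm_num) (by norm_num) (by rw [pow_eq_split _ 1000, pow_eq_split _ 1600]; norm_num)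
  · have e : (230/1000 : ℝ) = ((230:ℕ):ℝ)/((1000:ℕ):ℝ) := by norm_num
    rw [e]
    exact aux_rpow_le 230 1000 (by norm_num) (by norm_num) (by norm_num) (by rw [pow_eq_split _ 1000]; norm_num)
  · have e : (2:ℝ)*(230/1000) = ((460:ℕ):ℝ)/((1000:ℕ):ℝ) := by norm_num
    rw [e]
    exact aux_le_rpow 460 1000 (by norm_num) (by norm_num) (by norm_num) (by rw [pow_eq_split _ 1000, pow_eq_split _ 460]; norm_num)
  · have e : (1:ℝ)-(230/1000) = ((770:ℕ):ℝ)/((1000:ℕ):ℝ) := by norm_num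
    rw [e]
    exact aux_le_rpow 770 1000 (by norm_num) (by norm_num) (by norm_num) (by rw [pow_eq_split _ 1000, pow_eq_split _ 770]; norm_num)


set_option maxHeartbeats 4000000 in
lemma interval_13 (β : ℝ) (hβ : 0 < β) (hlo : 230/1000 ≤ β) (hhi : β ≤ 240/1000) :
    ((2 : ℝ) ^ β / (β ^ β * (1 - β) ^ (1 - β))) *
      (1 / 3 + (2 / 3) * (β / 3) ^ ((8 : ℝ) * β)) ≤ β ^ β := by
  refine step β (230/1000) (240/1000) (1773/200000) (11809927/10000000) (2520411/5000000) (324697/400000) hβ (by norm_num) hlo hhi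
    (by norm_num) (by norm_num) ?_ ?_ ?_ ?_ (by norm_num) (by norm_num) (by norm_num)
  · have e : (8:ℝ)*(230/1000) = ((1840:ℕ):ℝ)/((1000:ℕ):ℝ) := by norm_num
    rw [e]
    exact aux_rpow_le 1840 1000 (by norm_num) (by norm_num) (by norm_num) (by rw [pow_eq_split _ 1000, pow_eq_split _ 1840]; norm_num)
  · have e : (240/1000 : ℝ) = ((240:ℕ):ℝ)/((1000:ℕ):ℝ) := by norm_num
    rw [e]
    exact aux_rpow_le 240 1000 (by norm_num) (by norm_num) (by norm_num) (by rw [pow_eq_split _ 1000]; norm_num)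
  · have e : (2:ℝ)*(240/1000) = ((480:ℕ):ℝ)/((1000:ℕ):ℝ) := by norm_num
    rw [e]
    exact aux_le_rpow 480 1000 (by norm_num) (by norm_num) (by norm_num) (by rw [pow_eq_split _ 1000, pow_eq_split _ 480]; norm_num)
  · have e : (1:ℝ)-(240/1000) = ((760:ℕ):ℝ)/((1000:ℕ):ℝ) := by norm_num
    rw [e]
    exact aux_le_rpow 760 1000 (by norm_num) (by norm_num) (by norm_num) (by rw [pow_eq_split _ 1000, pow_eq_split _ 760]; norm_num)


set_option maxHeartbeats 4000000 in
lemma interval_14 (β : ℝ) (hβ : 0 < β) (hlo : 240/1000 ≤ β) (hhi : β ≤ 250/1000) :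
    ((2 : ℝ) ^ β / (β ^ β * (1 - β) ^ (1 - β))) *
      (1 / 3 + (2 / 3) * (β / 3) ^ ((8 : ℝ) * β)) ≤ β ^ β := by
  refine step β (240/1000) (250/1000) (78331/10000000) (1486509/1250000) (1/2) (4029637/5000000) hβ (by norm_num) hlo hhi
    (by norm_num) (by norm_num) ?_ ?_ ?_ ?_ (by norm_num) (by norm_num) (by norm_num)
  · have e : (8:ℝ)*(240/1000) = ((1920:ℕ):ℝ)/((1000:ℕ):ℝ) := by norm_num
    rw [e]
    exact aux_rpow_le 1920 1000 (by norm_num) (by norm_num) (by norm_num) (by rw [pow_eq_split _ 1000, pow_eq_split _ 1920]; norm_num)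
  · have e : (250/1000 : ℝ) = ((250:ℕ):ℝ)/((1000:ℕ):ℝ) := by norm_num
    rw [e]
    exact aux_rpow_le 250 1000 (by norm_num) (by norm_num) (by norm_num) (by rw [pow_eq_split _ 1000]; norm_num)
  · have e : (2:ℝ)*(250/1000) = ((500:ℕ):ℝ)/((1000:ℕ):ℝ) := by norm_num
    rw [e]
    exact aux_le_rpow 500 1000 (by norm_num) (by norm_num) (by norm_num) (by rw [pow_eq_split _ 1000, pow_eq_split _ 500]; norm_num)
  · have e : (1:ℝ)-(250/1000) = ((750:ℕ):ℝ)/((1000:ℕ):ℝ) := by norm_num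
    rw [e]
    exact aux_le_rpow 750 1000 (by norm_num) (by norm_num) (by norm_num) (by rw [pow_eq_split _ 1000, pow_eq_split _ 750]; norm_num)


theorem stmt_17 (β : ℝ) (hβ : 0 < β) (hβ' : β ≤ 1 / 4) :
    ((2 : ℝ) ^ β / (β ^ β * (1 - β) ^ (1 - β))) *
      (1 / 3 + (2 / 3) * (β / 3) ^ ((8 : ℝ) * β)) ≤ β ^ β := by
  rcases le_or_gt β (10/1000 : ℝ) with h0 | h0
  · exact case1 β hβ (by linarith)
  rcases le_or_gt β (13/1000 : ℝ) with h1 | h1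
  · exact interval_0 β hβ (by linarith) h1
  rcases le_or_gt β (17/1000 : ℝ) with h2 | h2
  · exact interval_1 β hβ (by linarith) h2
  rcases le_or_gt β (22/1000 : ℝ) with h3 | h3
  · exact interval_2 β hβ (by linarith) h3
  rcases le_or_gt β (28/1000 : ℝ) with h4 | h4
  · exact interval_3 β hβ (by linarith) h4
  rcases le_or_gt β (36/1000 : ℝ) with h5 | h5
  · exact interval_4 β hβ (by linarith) h5
  rcases le_or_gt β (46/1000 : ℝ) with h6 | h6
  · exact interval_5 β hβ (by linarith) h6
  rcases le_or_gt β (59/1000 : ℝ) with h7 | h7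
  · exact interval_6 β hβ (by linarith) h7
  rcases le_or_gt β (76/1000 : ℝ) with h8 | h8
  · exact interval_7 β hβ (by linarith) h8
  rcases le_or_gt β (98/1000 : ℝ) with h9 | h9
  · exact interval_8 β hβ (by linarith) h9
  rcases le_or_gt β (126/1000 : ℝ) with h10 | h10
  · exact interval_9 β hβ (by linarith) h10
  rcases le_or_gt β (162/1000 : ℝ) with h11 | h11
  · exact interval_10 β hβ (by linarith) h11
  rcases le_or_gt β (200/1000 : ℝ) with h12 | h12
  · exact interval_11 β hβ (by linarith) h12
  rcases le_or_gt β (230/1000 : ℝ) with h13 | h13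
  · exact interval_12 β hβ (by linarith) h13
  rcases le_or_gt β (240/1000 : ℝ) with h14 | h14
  · exact interval_13 β hβ (by linarith) h14
  exact interval_14 β hβ (by linarith) (by linarith)
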